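/- With A_k = k(k+1)···(k+p) and a_k = A_k - A_{k-1}, for all k ≥ 1: (1/A_k) ∑_{i=1}^{k} a_i^{p+1}/A_i^p ≤ (p+1)^{p+1}/k^p. -/

import Mathlib

theorem stmt_15 (p : ℕ) (hp : 1 ≤ p) (A : ℕ → ℝ)
    (hA : ∀ k, A k = ∏ i ∈ Finset.range (p + 1), ((k : ℝ) + i)) :
    ∀ k : ℕ, 1 ≤ k →
      (1 / A k) * ∑ i ∈ Finset.Icc 1 k, (A i - A (i - 1)) ^ (p + 1) / (A i) ^ p
        ≤ ((p : ℝ) + 1) ^ (p + 1) / (k : ℝ) ^ p := by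
  intro k hk
  have hApos : ∀ i : ℕ, 1 ≤ i → 0 < A i := by
    intro i hi
    rw [hA]
    apply Finset.prod_pos
    intro j _
    have h1 : (1 : ℝ) ≤ (i : ℝ) := by exact_mod_cast hi
    have h2 : (0 : ℝ) ≤ (j : ℝ) := Nat.cast_nonneg j
    linarith
  have hterm : ∀ i : ℕ, 1 ≤ i →
      (A i - A (i - 1)) ^ (p + 1) / (A i) ^ p ≤ ((p : ℝ) + 1) ^ (p + 1) := by
    intro i hi
    have h1 : (1 : ℝ) ≤ (i : ℝ) := by exact_mod_cast hi
    set B : ℝ := ∏ j ∈ Finset.range p, ((i : ℝ) + j) with hB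
    have hBpos : 0 < B := by
      apply Finset.prod_pos
      intro j _
      have h2 : (0 : ℝ) ≤ (j : ℝ) := Nat.cast_nonneg j
      linarith
    have hAi : A i = B * ((i : ℝ) + p) := by
      rw [hA, Finset.prod_range_succ]
    have hc : ((i - 1 : ℕ) : ℝ) = (i : ℝ) - 1 := by
      have := Nat.cast_sub (R := ℝ) hi
      simpa using this
    have hAim : A (i - 1) = ((i : ℝ) - 1) * B := by
      rw [hA, Finset.prod_range_succ']
      have hprod : ∏ j ∈ Finset.range p, (((i - 1 : ℕ) : ℝ) + (j + 1 : ℕ)) = B := by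
        apply Finset.prod_congr rfl
        intro j _
        rw [hc]
        push_cast
        ring
      rw [hprod, hc]
      ring
    have ha : A i - A (i - 1) = ((p : ℝ) + 1) * B := by
      rw [hAi, hAim]; ring
    have hBle : B ≤ ((i : ℝ) + p) ^ p := by
      calc B ≤ ∏ _j ∈ Finset.range p, ((i : ℝ) + p) := by
              apply Finset.prod_le_prod
              · intro j _
                have h2 : (0 : ℝ) ≤ (j : ℝ) := Nat.cast_nonneg j
                linarith
              · intro j hj
                have : (j : ℝ) ≤ (p : ℝ) := by
                  exact_mod_cast (Finset.mem_range.mp hj).le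
                linarith
        _ = ((i : ℝ) + p) ^ p := by rw [Finset.prod_const, Finset.card_range]
    have hAipos : 0 < A i := hApos i hi
    rw [ha, hAi, div_le_iff₀ (by positivity)]
    calc (((p : ℝ) + 1) * B) ^ (p + 1)
        = ((p : ℝ) + 1) ^ (p + 1) * B ^ p * B := by rw [mul_pow, pow_succ]; ring
      _ ≤ ((p : ℝ) + 1) ^ (p + 1) * B ^ p * (((i : ℝ) + p) ^ p) := by
          apply mul_le_mul_of_nonneg_left hBle
          positivity
      _ = ((p : ℝ) + 1) ^ (p + 1) * (B * ((i : ℝ) + p)) ^ p := by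
          rw [mul_pow]; ring
  have hsum : ∑ i ∈ Finset.Icc 1 k, (A i - A (i - 1)) ^ (p + 1) / (A i) ^ p
      ≤ (k : ℝ) * ((p : ℝ) + 1) ^ (p + 1) := by
    calc ∑ i ∈ Finset.Icc 1 k, (A i - A (i - 1)) ^ (p + 1) / (A i) ^ p
        ≤ ∑ _i ∈ Finset.Icc 1 k, ((p : ℝ) + 1) ^ (p + 1) :=
          Finset.sum_le_sum (fun i hi => hterm i (Finset.mem_Icc.mp hi).1)
      _ = (k : ℝ) * ((p : ℝ) + 1) ^ (p + 1) := by
          rw [Finset.sum_const, Nat.card_Icc, nsmul_eq_mul]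
          simp
  have hAk : (k : ℝ) ^ (p + 1) ≤ A k := by
    rw [hA]
    calc (k : ℝ) ^ (p + 1) = ∏ _j ∈ Finset.range (p + 1), (k : ℝ) := by
          rw [Finset.prod_const, Finset.card_range]
      _ ≤ ∏ j ∈ Finset.range (p + 1), ((k : ℝ) + j) := by
          apply Finset.prod_le_prod
          · intro j _
            positivity
          · intro j _
            have h2 : (0 : ℝ) ≤ (j : ℝ) := Nat.cast_nonneg j
            linarith
  have hAkpos : 0 < A k := hApos k hk
  have hkpos : (0 : ℝ) < (k : ℝ) := by exact_mod_cast hk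
  calc (1 / A k) * ∑ i ∈ Finset.Icc 1 k, (A i - A (i - 1)) ^ (p + 1) / (A i) ^ p
      ≤ (1 / A k) * ((k : ℝ) * ((p : ℝ) + 1) ^ (p + 1)) := by
        apply mul_le_mul_of_nonneg_left hsum
        positivity
    _ = (k : ℝ) * ((p : ℝ) + 1) ^ (p + 1) / A k := by ring
    _ ≤ ((p : ℝ) + 1) ^ (p + 1) / (k : ℝ) ^ p := by
        rw [div_le_div_iff₀ hAkpos (by positivity)]
        have : (k : ℝ) * ((p : ℝ) + 1) ^ (p + 1) * (k : ℝ) ^ p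
            = ((p : ℝ) + 1) ^ (p + 1) * (k : ℝ) ^ (p + 1) := by
          rw [pow_succ]; ring
        rw [this]
        exact mul_le_mul_of_nonneg_left hAk (by positivity)
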